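/- Let Γ be a girth-regular graph of valence k ≥ 3 and finite girth g, with signature (a_1, …, a_k), and let d = ⌊g/2⌋. Then a_k ≤ (k−1)^d; equivalently, every edge of Γ lies on at most (k−1)^d girth cycles. -/

import Mathlib

open SimpleGraph

/-- `s` is the edge set of some cycle of length `g` in `G`. -/
def IsGirthCycleEdgeSet {V : Type*} (G : SimpleGraph V) (g : ℕ) (s : Set (Sym2 V)) : Prop :=
  ∃ (u : V) (w : G.Walk u u), w.IsCycle ∧ w.length = g ∧ s = {e | e ∈ w.edges}

/-- The number of cycles of length `g` in `G` that contain the edge `e`. -/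
noncomputable def girthCycleCount {V : Type*} (G : SimpleGraph V) (g : ℕ) (e : Sym2 V) : ℕ :=
  Set.ncard {s : Set (Sym2 V) | IsGirthCycleEdgeSet G g s ∧ e ∈ s}

/-- The multiset of the numbers of `g`-cycles through the edges incident to `v`. -/
noncomputable def vertexSignature {V : Type*} [Fintype V] (G : SimpleGraph V) [DecidableRel G.Adj] (g : ℕ)
    (v : V) : Multiset ℕ :=
  ((G.neighborSet v).toFinite.toFinset.val).map fun u => girthCycleCount G g s(v, u)

namespace GirthAux

section Plain
variable {V : Type*} {G : SimpleGraph V}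

lemma support_getLast? {x c : V} (w : G.Walk x c) : w.support.getLast? = some c := by
  induction w with
  | nil => rfl
  | cons h t ih =>
      rw [Walk.support_cons]
      rw [Walk.support_eq_cons t] at ih ⊢
      rw [List.getLast?_cons_cons]
      exact ih

lemma walk_eq_of_support_eq {a b : V} (p q : G.Walk a b) (h : p.support = q.support) : p = q := by
  induction p with
  | nil =>
      cases q with
      | nil => rfl
      | cons h' t' =>
          rw [Walk.support_nil, Walk.support_cons] at h
          have := List.tail_eq_of_cons_eq h
          exact absurd this.symm (Walk.support_ne_nil t')
  | cons hadj t ih =>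
      cases q with
      | nil =>
          rw [Walk.support_nil, Walk.support_cons] at h
          have := List.tail_eq_of_cons_eq h
          exact absurd this (Walk.support_ne_nil t)
      | cons hadj' t' =>
          rw [Walk.support_cons, Walk.support_cons] at h
          have h2 := List.tail_eq_of_cons_eq h
          have hy := by
            rw [Walk.support_eq_cons t, Walk.support_eq_cons t'] at h2
            exact List.head_eq_of_cons_eq h2
          subst hy
          rw [ih t' h2]

/-- In a path starting at `a`, any edge containing `a` is the first edge. -/
lemma first_edge {a b w : V} (p : G.Walk a b) (hp : p.IsPath) (hw : s(a, w) ∈ p.edges) :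
    ∃ (h : G.Adj a w) (p' : G.Walk w b), p = Walk.cons h p' := by
  cases p with
  | nil => simp at hw
  | cons h t =>
      rw [Walk.edges_cons, List.mem_cons] at hw
      rcases hw with hw | hw
      · rw [Sym2.eq_iff] at hw
        rcases hw with ⟨-, rfl⟩ | ⟨h1, h2⟩
        · exact ⟨h, t, rfl⟩
        · subst h2; rw [← h1] at h; exact absurd rfl (G.ne_of_adj h)
      · exact absurd (Walk.fst_mem_support_of_mem_edges t hw)
          ((Walk.cons_isPath_iff h t).mp hp).2

/-- Split a walk after `n` steps. -/
lemma split_at (n : ℕ) {x c : V} (w : G.Walk x c) (hn : n ≤ w.length) :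
    ∃ (m : V) (P : G.Walk x m) (Q : G.Walk m c), w = P.append Q ∧ P.length = n ∧
      P.support = w.support.take (n + 1) ∧ Q.support = w.support.drop n := by
  induction n generalizing x w with
  | zero =>
      exact ⟨x, Walk.nil, w, (Walk.nil_append w).symm, rfl, by
        rw [Walk.support_eq_cons w]; rfl, rfl⟩
  | succ n ih =>
      cases w with
      | nil => simp at hn
      | cons h t =>
          obtain ⟨m, P, Q, h1, h2, h3, h4⟩ := ih t (by simpa using Nat.succ_le_succ_iff.mp hn)
          exact ⟨m, Walk.cons h P, Q, by rw [Walk.cons_append, h1], by simp [h2],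
            by simp [h3], by simpa using h4⟩

lemma egirth_le_of_isCycle {a : V} {w : G.Walk a a} (hw : w.IsCycle) :
    G.egirth ≤ w.length := by
  rw [egirth]
  exact iInf_le_of_le a (iInf_le_of_le w (iInf_le _ hw))

lemma isCycle_reverse {a : V} {w : G.Walk a a} (hw : w.IsCycle) : w.reverse.IsCycle := by
  rw [Walk.isCycle_def] at hw ⊢
  refine ⟨hw.1.reverse _, fun hnil => hw.2.1 (by simpa using congrArg Walk.reverse hnil), ?_⟩
  set l := w.support.tail with hl
  have hne : l ≠ [] := by
    intro hemp
    apply hw.2.1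
    cases w with
    | nil => rfl
    | cons h t =>
        rw [hl, Walk.support_cons, List.tail_cons] at hemp
        exact absurd hemp (Walk.support_ne_nil t)
  have hlast : l.getLast hne = a := by
    have h1 := support_getLast? w
    rw [Walk.support_eq_cons w, ← hl, List.getLast?_cons, List.getLast?_eq_getLast hne] at h1
    simpa using h1
  have hdec : l.dropLast ++ [a] = l := by rw [← hlast]; exact List.dropLast_append_getLast hne
  have hnd : (l.dropLast ++ [a]).Nodup := by rw [hdec]; exact hw.2.2
  rw [List.nodup_append] at hnd
  have hrev : l.reverse = a :: l.dropLast.reverse := by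
    conv_lhs => rw [← hdec]
    rw [List.reverse_append]; rfl
  rw [Walk.support_reverse, Walk.support_eq_cons w, ← hl, List.reverse_cons, hrev]
  simp only [List.cons_append, List.tail_cons, List.nodup_append, List.nodup_reverse]
  refine ⟨hnd.1, by simp, ?_⟩
  intro x hx
  simp only [List.mem_reverse] at hx
  simp only [List.mem_singleton]
  intro _ hxa
  subst hxa
  exact hnd.2.2 _ hx _ (by simp)

lemma first_meet {x b : V} (p : G.Walk x b) (L : List V) (hb : b ∈ L) :
    ∃ (u : V) (p₁ : G.Walk x u) (p₂ : G.Walk u b), p = p₁.append p₂ ∧ u ∈ L ∧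
      ∀ w ∈ p₁.support, w ∈ L → w = u := by
  induction p with
  | nil =>
      rename_i z
      refine ⟨z, (Walk.nil : G.Walk z z), (Walk.nil : G.Walk z z), rfl, hb, ?_⟩
      intro w hw _
      simpa using hw
  | @cons x y b h t ih =>
      by_cases hx : x ∈ L
      · refine ⟨x, Walk.nil, Walk.cons h t, rfl, hx, ?_⟩
        intro w hw _
        simpa using hw
      · obtain ⟨u, t₁, t₂, h1, h2, h3⟩ := ih hb
        refine ⟨u, Walk.cons h t₁, t₂, by rw [Walk.cons_append, h1], h2, ?_⟩
        intro w hw hwL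
        rw [Walk.support_cons, List.mem_cons] at hw
        rcases hw with rfl | hw
        · exact absurd hwL hx
        · exact h3 w hw hwL

/-- Quantitative path-uniqueness. -/
lemma egirth_le_of_two_paths : ∀ (n : ℕ) {a b : V} (p q : G.Walk a b), p.IsPath → q.IsPath →
    p ≠ q → p.length + q.length ≤ n → G.egirth ≤ (p.length + q.length : ℕ) := by
  classical
  intro n
  induction n with
  | zero =>
      intro a b p q hp hq hpq hn
      rw [Nat.le_zero, Nat.add_eq_zero] at hn
      cases p with
      | nil =>
          rw [(Walk.isPath_iff_eq_nil (p := q)).mp hq] at hpq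
          exact absurd rfl hpq
      | cons h t => simp at hn
  | succ n ih =>
      intro a b p q hp hq hpq hn
      cases p with
      | nil =>
          rw [(Walk.isPath_iff_eq_nil (p := q)).mp hq] at hpq
          exact absurd rfl hpq
      | @cons a x b h1 p' =>
          cases q with
          | nil =>
              exact absurd ((Walk.isPath_iff_eq_nil (p := Walk.cons h1 p')).mp hp) hpq
          | @cons a y b h2 q' =>
              by_cases hxy : x = y
              · subst hxy
                have hne : p' ≠ q' := fun hcon => hpq (by rw [hcon])
                have hp' := ((Walk.cons_isPath_iff h1 p').mp hp).1
                have hq' := ((Walk.cons_isPath_iff h2 q').mp hq).1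
                have hle : p'.length + q'.length ≤ n := by
                  simp only [Walk.length_cons] at hn; omega
                refine le_trans (ih p' q' hp' hq' hne hle) ?_
                rw [Nat.cast_le]
                simp only [Walk.length_cons]; omega
              · -- main case: first edges differ; build a cycle
                set q : G.Walk a b := Walk.cons h2 q' with hqdef
                obtain ⟨u', p₁, p₂, hsplit, hu', hmin⟩ :=
                  first_meet p' q.support q.end_mem_support
                have hp' : p'.IsPath := ((Walk.cons_isPath_iff h1 p').mp hp).1
                have ha_np' : a ∉ p'.support := ((Walk.cons_isPath_iff h1 p').mp hp).2
                have hp₁ : p₁.IsPath := by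
                  rw [hsplit] at hp'
                  exact hp'.of_append_left
                have hqseg_path : (q.takeUntil u' hu').IsPath := hq.takeUntil hu'
                have hqseg_sub : (q.takeUntil u' hu').support ⊆ q.support :=
                  Walk.support_takeUntil_subset q hu'
                set P : G.Walk a x := (q.takeUntil u' hu').append p₁.reverse with hP
                have hrev_nodup : p₁.reverse.support.Nodup :=
                  (Walk.isPath_def _).mp hp₁.reverse
                have hu'_nt : u' ∉ p₁.reverse.support.tail := by
                  have := Walk.support_eq_cons p₁.reverse
                  intro hcon
                  have hnd : p₁.reverse.support.Nodup := hrev_nodup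
                  rw [this, List.nodup_cons] at hnd
                  exact hnd.1 hcon
                have hPpath : P.IsPath := by
                  rw [Walk.isPath_def, hP, Walk.support_append, List.nodup_append]
                  refine ⟨(Walk.isPath_def _).mp hqseg_path, ?_, ?_⟩
                  · have := hrev_nodup
                    exact this.tail
                  · intro w hw w' hw2 hww'; subst hww'
                    have hwq : w ∈ q.support := hqseg_sub hw
                    have hwp₁ : w ∈ p₁.support := by
                      have : w ∈ p₁.reverse.support := List.mem_of_mem_tail hw2
                      rwa [Walk.support_reverse, List.mem_reverse] at this
                    exact hu'_nt ((hmin w hwp₁ hwq) ▸ hw2)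
                have hnoedge : s(x, a) ∉ P.edges := by
                  rw [hP, Walk.edges_append, List.mem_append]
                  rintro (hin | hin)
                  · have hin' : s(x, a) ∈ q.edges := Walk.edges_takeUntil_subset q hu' hin
                    rw [hqdef, Walk.edges_cons, List.mem_cons] at hin'
                    rcases hin' with hin' | hin'
                    · rw [Sym2.eq_iff] at hin'
                      rcases hin' with ⟨hxa, -⟩ | ⟨hxy', -⟩
                      · exact absurd hxa.symm (G.ne_of_adj h1)
                      · exact hxy hxy'
                    · have := Walk.snd_mem_support_of_mem_edges q' hin'
                      exact ((Walk.cons_isPath_iff h2 q').mp hq).2 this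
                  · rw [Walk.edges_reverse, List.mem_reverse] at hin
                    have := Walk.snd_mem_support_of_mem_edges p₁ hin
                    have : a ∈ p'.support := by
                      rw [hsplit]
                      exact Walk.subset_support_append_left p₁ p₂ this
                    exact ha_np' this
                have hcyc : (Walk.cons h1.symm P).IsCycle :=
                  (Walk.cons_isCycle_iff P h1.symm).mpr ⟨hPpath, hnoedge⟩
                refine le_trans (egirth_le_of_isCycle hcyc) ?_
                rw [Nat.cast_le]
                have hlen1 : (q.takeUntil u' hu').length ≤ q.length :=
                  Walk.length_takeUntil_le q hu'
                have hlen2 : p₁.length ≤ p'.length := by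
                  rw [hsplit, Walk.length_append]; omega
                simp only [Walk.length_cons, hP, Walk.length_append, Walk.length_reverse]
                omega


end Plain

section Fin
variable {V : Type*} [Fintype V] [DecidableEq V] (G : SimpleGraph V) [DecidableRel G.Adj]

/-- Lists of `n` vertices forming a non-backtracking walk continuing from `x`, where the previous
vertex was `pr`. -/
def nb : ℕ → V → V → Finset (List V)
  | 0, _, _ => {[]}
  | (n+1), x, pr =>
      ((G.neighborFinset x).erase pr).biUnion fun y => (nb n y x).image (y :: ·)

variable {G}

lemma nb_card {k : ℕ} (hreg : G.IsRegularOfDegree k) :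
    ∀ (n : ℕ) (x pr : V), G.Adj x pr → (nb G n x pr).card ≤ (k - 1) ^ n := by
  intro n
  induction n with
  | zero => intro x pr _; simp [nb]
  | succ n ih =>
      intro x pr hadj
      rw [nb]
      refine le_trans (Finset.card_biUnion_le) ?_
      have hb : ∀ y ∈ (G.neighborFinset x).erase pr,
          ((nb G n y x).image (y :: ·)).card ≤ (k-1)^n := by
        intro y hy
        refine le_trans (Finset.card_image_le) (ih y x ?_)
        exact (G.mem_neighborFinset x y).mp (Finset.mem_of_mem_erase hy) |>.symm
      refine le_trans (Finset.sum_le_sum hb) ?_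
      rw [Finset.sum_const, smul_eq_mul]
      have hcard : ((G.neighborFinset x).erase pr).card = k - 1 := by
        rw [Finset.card_erase_of_mem ((G.mem_neighborFinset x pr).mpr hadj)]
        rw [G.card_neighborFinset_eq_degree, hreg x]
      rw [hcard, pow_succ, mul_comm]

lemma nb_mem : ∀ (n : ℕ) {x c : V} (pr : V) (w : G.Walk x c), n ≤ w.length →
    (w.support.take (n+1)).Nodup → (w.support.tail.head? ≠ some pr ∨ n = 0) →
    w.support.tail.take n ∈ nb G n x pr := by
  intro n
  induction n with
  | zero => intro x c pr w _ _ _; simp [nb]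
  | succ n ih =>
      intro x c pr w hlen hnd hh
      cases w with
      | nil => simp at hlen
      | @cons x y c h t =>
          rw [Walk.support_cons] at hnd hh ⊢
          rw [List.tail_cons] at hh ⊢
          rw [List.take_succ_cons] at hnd
          rw [Walk.support_eq_cons t, List.take_succ_cons]
          rw [nb, Finset.mem_biUnion]
          have hndt : (t.support.take (n+1)).Nodup := hnd.of_cons
          refine ⟨y, ?_, ?_⟩
          · rw [Finset.mem_erase]
            refine ⟨?_, (G.mem_neighborFinset x y).mpr h⟩
            rcases hh with hh | hh
            · intro hcon
              apply hh
              rw [Walk.support_eq_cons t, List.head?_cons]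
              exact congrArg some hcon
            · exact absurd hh (Nat.succ_ne_zero n)
          · rw [Finset.mem_image]
            refine ⟨t.support.tail.take n, ?_, rfl⟩
            refine ih x t (by simp only [Walk.length_cons] at hlen; omega) hndt ?_
            by_cases hn : n = 0
            · right; exact hn
            · left
              intro hcon
              have hx : x ∈ t.support.take (n+1) := by
                cases ht : t.support.tail with
                | nil => rw [ht] at hcon; simp at hcon
                | cons z rest =>
                    rw [ht, List.head?_cons, Option.some_inj] at hcon
                    subst hcon
                    rw [Walk.support_eq_cons t, ht, List.take_succ_cons]
                    obtain ⟨m, rfl⟩ := Nat.exists_eq_succ_of_ne_zero hn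
                    rw [List.take_succ_cons]
                    exact List.mem_cons_of_mem _ List.mem_cons_self
              rw [List.nodup_cons] at hnd
              exact hnd.1 hx


end Fin

section Main
variable {V : Type*} {G : SimpleGraph V}

/-- Any girth cycle through the edge `uv` can be re-based and oriented so that it starts at `u`
and does not move to `v` first. -/
lemma good_exists {u v : V} (huv : G.Adj u v) {g : ℕ} (w : G.Walk u u)
    (hcyc : w.IsCycle) (hlen : w.length = g) (he : s(u,v) ∈ w.edges) :
    ∃ w' : G.Walk u u, w'.IsCycle ∧ w'.length = g ∧ (∀ e, e ∈ w'.edges ↔ e ∈ w.edges) ∧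
      w'.support.tail.head? ≠ some v := by
  cases w with
  | nil => simp at he
  | @cons u y u' h t =>
      have ht_path : t.IsPath := ((Walk.cons_isCycle_iff t h).mp hcyc).1
      by_cases hy : y = v
      · subst hy
        have htlen : 2 ≤ t.length := by
          have h3 := hcyc.three_le_length
          rw [Walk.length_cons] at h3
          omega
        have hnn : ¬ t.reverse.Nil := by
          rw [Walk.nil_iff_length_eq, Walk.length_reverse]
          omega
        obtain ⟨z, h2, r, htr⟩ := Walk.not_nil_iff.mp hnn
        have hz : z ≠ y := by
          intro hcon
          have hr_path : r.IsPath := by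
            have h5 := ht_path.reverse
            rw [htr] at h5
            exact h5.of_cons
          subst hcon
          have hrnil : r = Walk.nil := (Walk.isPath_iff_eq_nil (p := r)).mp hr_path
          rw [hrnil] at htr
          have h6 := congrArg Walk.length htr
          rw [Walk.length_reverse] at h6
          simp at h6
          omega
        refine ⟨(Walk.cons h t).reverse, isCycle_reverse hcyc,
          by rw [Walk.length_reverse, hlen],
          fun e => by rw [Walk.edges_reverse, List.mem_reverse], ?_⟩
        rw [Walk.reverse_cons, htr, Walk.cons_append, Walk.support_cons, List.tail_cons,
          Walk.support_eq_cons, List.head?_cons]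
        intro hcon
        exact hz (Option.some_inj.mp hcon)
      · refine ⟨Walk.cons h t, hcyc, hlen, fun e => Iff.rfl, ?_⟩
        rw [Walk.support_cons, List.tail_cons, Walk.support_eq_cons, List.head?_cons]
        intro hcon
        exact hy (Option.some_inj.mp hcon)


/-- Structure of a good girth cycle through `uv`: it splits after `d` steps into an initial
path `P` determined by the first `d+1` vertices, and a final path whose reverse starts with
the edge `uv` followed by a path `R` from `v` of length `g - d - 1`. -/
lemma good_split {u v : V} {g d : ℕ} (hd1 : 1 ≤ d) (hdg : d + 2 ≤ g)
    (w : G.Walk u u) (hcyc : w.IsCycle) (hlen : w.length = g)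
    (hhead : w.support.tail.head? ≠ some v) (he : s(u,v) ∈ w.edges) :
    ∃ (m : V) (P : G.Walk u m) (Q : G.Walk m u),
      w = P.append Q ∧ P.length = d ∧ P.support = u :: w.support.tail.take d ∧
      (w.support.take (d+1)).Nodup ∧
      ∃ (h2 : G.Adj u v) (R : G.Walk v m), Q.reverse = Walk.cons h2 R ∧ R.IsPath ∧
        R.length = g - d - 1 := by
  obtain ⟨d', rfl⟩ : ∃ d', d = d' + 1 := ⟨d - 1, by omega⟩
  obtain ⟨m, P, Q, hw, hPlen, hPsup, hQsup⟩ := split_at (d'+1) w (by rw [hlen]; omega)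
  have hsupp : w.support = u :: w.support.tail := Walk.support_eq_cons w
  have htl_nodup : w.support.tail.Nodup := hcyc.support_nodup
  have hPsup' : P.support = u :: w.support.tail.take (d'+1) := by
    rw [hPsup]
    conv_lhs => rw [hsupp]
    rw [List.take_succ_cons]
  have hQsup' : Q.support = w.support.tail.drop d' := by
    rw [hQsup]
    conv_lhs => rw [hsupp]
    rw [List.drop_succ_cons]
  have hQlen : Q.length = g - (d'+1) := by
    have h6 := congrArg Walk.length hw
    rw [Walk.length_append, hPlen, hlen] at h6
    omega
  have hQtail : Q.support.tail = w.support.tail.drop (d'+1) := by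
    rw [hQsup', List.tail_drop]
  have hQnn : ¬ Q.Nil := by
    rw [Walk.nil_iff_length_eq, hQlen]
    omega
  obtain ⟨z1, hz1, Q2, hQeq⟩ := Walk.not_nil_iff.mp hQnn
  have huQ : u ∈ Q.support.tail := by
    rw [hQeq, Walk.support_cons, List.tail_cons]
    exact Walk.end_mem_support Q2
  have hdisj : u ∉ w.support.tail.take (d'+1) := by
    have hnd2 := htl_nodup
    rw [← List.take_append_drop (d'+1) w.support.tail, List.nodup_append] at hnd2
    intro hcon
    exact hnd2.2.2 _ hcon _ (hQtail ▸ huQ) rfl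
  have hPnodup : P.support.Nodup := by
    rw [hPsup', List.nodup_cons]
    exact ⟨hdisj, htl_nodup.sublist (List.take_sublist _ _)⟩
  have htake_nodup : (w.support.take (d'+1+1)).Nodup := by
    rw [← hPsup]; exact hPnodup
  have hPpath : P.IsPath := Walk.IsPath.mk' hPnodup
  have hQpath : Q.IsPath := by
    refine Walk.IsPath.mk' ?_
    rw [hQsup']
    exact htl_nodup.sublist (List.drop_sublist _ _)
  have heQ : s(u,v) ∈ Q.edges := by
    have he' := he
    rw [hw, Walk.edges_append, List.mem_append] at he'
    rcases he' with hinP | hinQ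
    · exfalso
      obtain ⟨hA, P₂, hPeq⟩ := first_edge P hPpath hinP
      have h7 : P.support = u :: v :: P₂.support.tail := by
        rw [hPeq, Walk.support_cons]
        congr 1
        exact Walk.support_eq_cons P₂
      rw [hPsup'] at h7
      have h8 : w.support.tail.take (d'+1) = v :: P₂.support.tail := List.tail_eq_of_cons_eq h7
      cases htl : w.support.tail with
      | nil => rw [htl] at h8; simp at h8
      | cons a rest =>
          rw [htl, List.take_succ_cons] at h8
          have ha : a = v := List.head_eq_of_cons_eq h8
          rw [htl, ha] at hhead
          exact hhead rfl
    · exact hinQ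
  have heQr : s(u,v) ∈ Q.reverse.edges := by
    rw [Walk.edges_reverse, List.mem_reverse]; exact heQ
  obtain ⟨h2, R, hQr⟩ := first_edge Q.reverse hQpath.reverse heQr
  have hRpath : R.IsPath := by
    have h9 := hQpath.reverse
    rw [hQr] at h9
    exact h9.of_cons
  have hRlen : R.length = g - (d'+1) - 1 := by
    have h10 := congrArg Walk.length hQr
    rw [Walk.length_reverse, hQlen, Walk.length_cons] at h10
    omega
  exact ⟨m, P, Q, hw, hPlen, hPsup', htake_nodup, h2, R, hQr, hRpath, hRlen⟩

lemma edge_bound [Fintype V] [DecidableEq V] [DecidableRel G.Adj] {k g : ℕ}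
    (hreg : G.IsRegularOfDegree k) (hg : G.egirth = (g : ℕ∞)) {u v : V} (huv : G.Adj u v) :
    girthCycleCount G g s(u,v) ≤ (k-1)^(g/2) := by
  classical
  have hg3 : 3 ≤ g := by
    have h3 := G.three_le_egirth
    rw [hg] at h3
    exact_mod_cast h3
  set d := g/2 with hd
  have hd1 : 1 ≤ d := by omega
  have hdg : d + 2 ≤ g := by omega
  have hex : ∀ s ∈ {s : Set (Sym2 V) | IsGirthCycleEdgeSet G g s ∧ s(u,v) ∈ s},
      ∃ w : G.Walk u u, w.IsCycle ∧ w.length = g ∧ (∀ e, e ∈ s ↔ e ∈ w.edges) ∧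
        w.support.tail.head? ≠ some v := by
    rintro s ⟨⟨c, w0, hcyc, hlen, hset⟩, hmem⟩
    have he0 : s(u,v) ∈ w0.edges := by rw [hset] at hmem; exact hmem
    have hu : u ∈ w0.support := w0.fst_mem_support_of_mem_edges he0
    have hrot := Walk.rotate_edges w0 u hu
    have hmemiff : ∀ e : Sym2 V, e ∈ (w0.rotate u hu).edges ↔ e ∈ w0.edges :=
      fun e => hrot.mem_iff
    obtain ⟨w', hc', hl', hiff', hh'⟩ := good_exists huv (w0.rotate u hu) (hcyc.rotate hu)
      (by rw [← Walk.length_edges, hrot.perm.length_eq, Walk.length_edges, hlen])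
      ((hmemiff _).mpr he0)
    refine ⟨w', hc', hl', fun e => ?_, hh'⟩
    rw [hset]
    exact Iff.symm ((hiff' e).trans (hmemiff e))
  set F : Set (Sym2 V) → List V := fun s =>
    if h : ∃ w : G.Walk u u, w.IsCycle ∧ w.length = g ∧ (∀ e, e ∈ s ↔ e ∈ w.edges) ∧
        w.support.tail.head? ≠ some v then (Classical.choose h).support.tail.take d
    else [] with hF
  have hFs : ∀ s ∈ {s : Set (Sym2 V) | IsGirthCycleEdgeSet G g s ∧ s(u,v) ∈ s},
      ∃ w : G.Walk u u, w.IsCycle ∧ w.length = g ∧ (∀ e, e ∈ s ↔ e ∈ w.edges) ∧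
        w.support.tail.head? ≠ some v ∧ F s = w.support.tail.take d := by
    intro s hs
    have h := hex s hs
    obtain ⟨h1, h2, h3, h4⟩ := Classical.choose_spec h
    refine ⟨Classical.choose h, h1, h2, h3, h4, ?_⟩
    rw [hF]
    dsimp only
    rw [dif_pos h]
  have hmaps : ∀ s ∈ {s : Set (Sym2 V) | IsGirthCycleEdgeSet G g s ∧ s(u,v) ∈ s},
      F s ∈ (↑(nb G d u v) : Set (List V)) := by
    intro s hs
    obtain ⟨w, hcyc, hlen, hiff, hhead, hFeq⟩ := hFs s hs
    have he : s(u,v) ∈ w.edges := (hiff _).mp hs.2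
    obtain ⟨m, P, Q, hw, hPlen, hPsup, hnd, _⟩ := good_split hd1 hdg w hcyc hlen hhead he
    rw [hFeq]
    exact nb_mem d v w (by rw [hlen]; omega) hnd (Or.inl hhead)
  have hinj : Set.InjOn F {s : Set (Sym2 V) | IsGirthCycleEdgeSet G g s ∧ s(u,v) ∈ s} := by
    intro s hs s' hs' hFF
    obtain ⟨w, hcyc, hlen, hiff, hhead, hFw⟩ := hFs s hs
    obtain ⟨w', hcyc', hlen', hiff', hhead', hFw'⟩ := hFs s' hs'
    have he : s(u,v) ∈ w.edges := (hiff _).mp hs.2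
    have he' : s(u,v) ∈ w'.edges := (hiff' _).mp hs'.2
    obtain ⟨m, P, Q, hw, hPlen, hPsup, hnd, h2, R, hQr, hRpath, hRlen⟩ :=
      good_split hd1 hdg w hcyc hlen hhead he
    obtain ⟨m', P', Q', hw', hPlen', hPsup', hnd', h2', R', hQr', hRpath', hRlen'⟩ :=
      good_split hd1 hdg w' hcyc' hlen' hhead' he'
    have htk : w.support.tail.take d = w'.support.tail.take d := by
      rw [← hFw, ← hFw']; exact hFF
    have hPsup_eq : P.support = P'.support := by rw [hPsup, hPsup', htk]
    have hm : m = m' := by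
      have e1 := support_getLast? P
      have e2 := support_getLast? P'
      rw [hPsup_eq, e2] at e1
      exact (Option.some_inj.mp e1).symm
    subst hm
    have hReq : R = R' := by
      by_contra hne
      have hb := egirth_le_of_two_paths (R.length + R'.length) R R' hRpath hRpath' hne le_rfl
      rw [hg, Nat.cast_le, hRlen, hRlen'] at hb
      omega
    have hQeq : Q = Q' := by
      have h11 : Q.reverse = Q'.reverse := by rw [hQr, hQr', hReq]
      have h12 := congrArg Walk.reverse h11
      rwa [Walk.reverse_reverse, Walk.reverse_reverse] at h12
    have hPeq : P = P' := walk_eq_of_support_eq P P' hPsup_eq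
    have hweq : w = w' := by rw [hw, hw', hPeq, hQeq]
    exact Set.ext fun e => by rw [hiff e, hiff' e, hweq]
  calc girthCycleCount G g s(u,v)
      = Set.ncard {s : Set (Sym2 V) | IsGirthCycleEdgeSet G g s ∧ s(u,v) ∈ s} := rfl
    _ ≤ (↑(nb G d u v) : Set (List V)).ncard :=
        Set.ncard_le_ncard_of_injOn F hmaps hinj (Finset.finite_toSet _)
    _ = (nb G d u v).card := Set.ncard_coe_finset _
    _ ≤ (k-1)^d := nb_card hreg d u v huv


end Main

end GirthAux

/-- In a girth-regular graph of valence `k ≥ 3` and finite girth `g` with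
signature `(a 0, …, a (k-1))`, every signature entry (in particular the largest, `a (k-1)`)
is at most `(k-1)^⌊g/2⌋`; equivalently, every edge lies on at most `(k-1)^⌊g/2⌋` girth
cycles. -/
theorem stmt0 {V : Type*} [Fintype V] (G : SimpleGraph V) [DecidableRel G.Adj] (k g : ℕ) (hk : 3 ≤ k)
    (hreg : G.IsRegularOfDegree k) (hg : G.egirth = (g : ℕ∞))
    (a : Fin k → ℕ) (hmono : Monotone a)
    (hsig : ∀ v : V, vertexSignature G g v = Multiset.map a Finset.univ.val) :
    (∀ i : Fin k, a i ≤ (k - 1) ^ (g / 2)) ∧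
      (∀ e ∈ G.edgeSet, girthCycleCount G g e ≤ (k - 1) ^ (g / 2)) := by
  classical
  have key : ∀ e ∈ G.edgeSet, girthCycleCount G g e ≤ (k - 1) ^ (g / 2) := by
    intro e he
    exact Sym2.ind (fun u v hu => GirthAux.edge_bound hreg hg (G.mem_edgeSet.mp hu)) e he
  refine ⟨?_, key⟩
  intro i
  have hnac : ¬ G.IsAcyclic := by
    intro hac
    rw [← egirth_eq_top] at hac
    rw [hac] at hg
    exact absurd hg.symm (ENat.coe_ne_top g)
  obtain ⟨x, w, hwc, hwl⟩ := (exists_egirth_eq_length (G := G)).mpr hnac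
  have hs := hsig x
  have hmem : a i ∈ Multiset.map a Finset.univ.val :=
    Multiset.mem_map.mpr ⟨i, by simp, rfl⟩
  rw [← hs] at hmem
  unfold vertexSignature at hmem
  rw [Multiset.mem_map] at hmem
  obtain ⟨y, hy, hyeq⟩ := hmem
  have hadj : G.Adj x y := by
    have h1 : y ∈ (G.neighborSet x).toFinite.toFinset := Finset.mem_val.mp hy
    rw [Set.Finite.mem_toFinset] at h1
    exact h1
  rw [← hyeq]
  exact key s(x,y) (G.mem_edgeSet.mpr hadj)
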